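/- Fix p ∈ (1,∞). The function H* is convex on [0,1]². Moreover, H* is strictly convex on (0,1] × [0,1]: for all f, g in (0,1] × [0,1] with f ≠ g and all θ ∈ (0,1), H*(θf + (1−θ)g) < θ H*(f) + (1−θ) H*(g). -/

import Mathlib

open Real Set

/-- The limiting objective `H*` on `[0,1]²`. -/
noncomputable def Hstar (p : ℝ) (f : ℝ × ℝ) : ℝ :=
  -f.1 + (f.1 ^ p + (1 - f.2) ^ p) ^ (1 / p) + (f.1 ^ p + f.2 ^ p) ^ (1 / p) - 1

/-- `Np p x y = (x^p + y^p)^(1/p)`. -/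
noncomputable def Np (p x y : ℝ) : ℝ := (x ^ p + y ^ p) ^ (1 / p)


/-- Two-point Minkowski inequality. -/
lemma minkowski2 {p : ℝ} (hp : 1 ≤ p) {a b c d : ℝ} (ha : 0 ≤ a) (hb : 0 ≤ b)
    (hc : 0 ≤ c) (hd : 0 ≤ d) :
    Np p (a + c) (b + d) ≤ Np p a b + Np p c d := by
  have := Real.Lp_add_le (Finset.univ : Finset (Fin 2)) ![a, b] ![c, d] hp
  simpa [Np, Fin.sum_univ_two, abs_of_nonneg, ha, hb, hc, hd, abs_of_nonneg (add_nonneg ha hc),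
    abs_of_nonneg (add_nonneg hb hd)] using this

lemma Np_smul {p : ℝ} (hp : 0 < p) {c x y : ℝ} (hc : 0 ≤ c) (hx : 0 ≤ x) (hy : 0 ≤ y) :
    Np p (c * x) (c * y) = c * Np p x y := by
  unfold Np
  rw [Real.mul_rpow hc hx, Real.mul_rpow hc hy, ← mul_add,
    Real.mul_rpow (Real.rpow_nonneg hc p) (add_nonneg (Real.rpow_nonneg hx p) (Real.rpow_nonneg hy p)),
    ← Real.rpow_mul hc, mul_one_div, div_self hp.ne', Real.rpow_one]

/-- Convexity inequality for `Np` on the nonnegative quadrant. -/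
lemma Np_conv {p : ℝ} (hp : 1 ≤ p) {x₁ y₁ x₂ y₂ a b : ℝ} (hx₁ : 0 ≤ x₁) (hy₁ : 0 ≤ y₁)
    (hx₂ : 0 ≤ x₂) (hy₂ : 0 ≤ y₂) (ha : 0 ≤ a) (hb : 0 ≤ b) :
    Np p (a * x₁ + b * x₂) (a * y₁ + b * y₂) ≤ a * Np p x₁ y₁ + b * Np p x₂ y₂ := by
  have h0 : (0:ℝ) < p := lt_of_lt_of_le one_pos hp
  calc Np p (a * x₁ + b * x₂) (a * y₁ + b * y₂)
      ≤ Np p (a * x₁) (a * y₁) + Np p (b * x₂) (b * y₂) :=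
        minkowski2 hp (by positivity) (by positivity) (by positivity) (by positivity)
    _ = a * Np p x₁ y₁ + b * Np p x₂ y₂ := by
        rw [Np_smul h0 ha hx₁ hy₁, Np_smul h0 hb hx₂ hy₂]

/-- `φ t = (1 + t^p)^(1/p)` is strictly convex on `[0,∞)`. -/
lemma phi_strictConvex {p : ℝ} (hp : 1 < p) :
    StrictConvexOn ℝ (Set.Ici (0:ℝ)) (fun t : ℝ => (1 + t ^ p) ^ (1 / p)) := by
  have hp0 : (0:ℝ) < p := one_pos.trans hp
  have hcont : Continuous fun t : ℝ => (1 + t ^ p) ^ (1 / p) := by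
    have h1 : Continuous fun t : ℝ => 1 + t ^ p :=
      continuous_const.add (continuous_iff_continuousAt.2 fun x =>
        Real.continuousAt_rpow_const x p (Or.inr hp0.le))
    exact continuous_iff_continuousAt.2 fun x =>
      (Real.continuousAt_rpow_const _ _ (Or.inr (by positivity))).comp h1.continuousAt
  apply StrictMonoOn.strictConvexOn_of_deriv (convex_Ici 0) hcont.continuousOn
  rw [interior_Ici]
  have hderiv : ∀ t ∈ Set.Ioi (0:ℝ),
      deriv (fun t : ℝ => (1 + t ^ p) ^ (1 / p)) t = t ^ (p-1) * (1 + t ^ p) ^ (1/p - 1) := by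
    intro t ht
    have ht' : (0:ℝ) < t := ht
    have hin : HasDerivAt (fun t : ℝ => 1 + t ^ p) (p * t ^ (p - 1)) t :=
      (Real.hasDerivAt_rpow_const (Or.inl ht'.ne')).const_add 1
    have hpos : (0:ℝ) < 1 + t ^ p := by positivity
    have hout : HasDerivAt (fun u : ℝ => u ^ (1/p)) ((1/p) * (1 + t ^ p) ^ (1/p - 1)) (1 + t ^ p) :=
      Real.hasDerivAt_rpow_const (Or.inl hpos.ne')
    have := hout.comp t hin
    have heq : (1/p) * (1 + t ^ p) ^ (1/p - 1) * (p * t ^ (p-1))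
        = t ^ (p-1) * (1 + t ^ p) ^ (1/p - 1) := by
      field_simp
    rw [← heq]
    exact this.deriv
  intro s hs t ht hst
  rw [hderiv s hs, hderiv t ht]
  have hs' : (0:ℝ) < s := hs
  have ht' : (0:ℝ) < t := ht
  set q : ℝ := p / (p - 1) with hq
  have hq0 : 0 < q := by
    apply div_pos hp0; linarith
  have key : ∀ u : ℝ, 0 < u →
      (u ^ (p-1) * (1 + u ^ p) ^ (1/p - 1)) ^ q = u ^ p / (1 + u ^ p) := by
    intro u hu
    have h1 : (0:ℝ) < 1 + u ^ p := by positivity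
    rw [Real.mul_rpow (Real.rpow_nonneg hu.le _) (Real.rpow_nonneg h1.le _),
      ← Real.rpow_mul hu.le, ← Real.rpow_mul h1.le]
    have hne1 : p - 1 ≠ 0 := sub_ne_zero.2 hp.ne'
    have e1 : (p - 1) * q = p := by rw [hq, mul_comm, div_mul_cancel₀ _ hne1]
    have e2 : (1/p - 1) * q = -1 := by
      rw [hq]
      field_simp
      ring
    rw [e1, e2, Real.rpow_neg_one]
    rw [div_eq_mul_inv]
  have hlt : (s ^ (p-1) * (1 + s ^ p) ^ (1/p - 1)) ^ q
      < (t ^ (p-1) * (1 + t ^ p) ^ (1/p - 1)) ^ q := by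
    rw [key s hs', key t ht']
    have hsp : s ^ p < t ^ p := Real.rpow_lt_rpow hs'.le hst hp0
    have h1 : (0:ℝ) < 1 + s ^ p := by positivity
    have h2 : (0:ℝ) < 1 + t ^ p := by positivity
    rw [div_lt_div_iff₀ h1 h2]
    nlinarith [Real.rpow_nonneg hs'.le p, Real.rpow_nonneg ht'.le p]
  by_contra hle
  push_neg at hle
  have : (t ^ (p-1) * (1 + t ^ p) ^ (1/p - 1)) ^ q
      ≤ (s ^ (p-1) * (1 + s ^ p) ^ (1/p - 1)) ^ q :=
    Real.rpow_le_rpow (by positivity) hle hq0.le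
  linarith

/-- Perspective formula. -/
lemma Np_persp {p x y : ℝ} (hp : 0 < p) (hx : 0 < x) (hy : 0 ≤ y) :
    Np p x y = x * (1 + (y / x) ^ p) ^ (1 / p) := by
  unfold Np
  rw [Real.div_rpow hy hx.le]
  have hxp : (0:ℝ) < x ^ p := Real.rpow_pos_of_pos hx p
  have : 1 + y ^ p / x ^ p = (x ^ p + y ^ p) / x ^ p := by field_simp
  rw [this, Real.div_rpow (by positivity) hxp.le, ← Real.rpow_mul hx.le,
    mul_one_div, div_self hp.ne', Real.rpow_one]
  field_simp

/-- Strict convexity of `Np` in directions transverse to rays. -/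
lemma Np_strict {p : ℝ} (hp : 1 < p) {x₁ y₁ x₂ y₂ θ : ℝ} (hx₁ : 0 < x₁) (hy₁ : 0 ≤ y₁)
    (hx₂ : 0 < x₂) (hy₂ : 0 ≤ y₂) (hθ : 0 < θ) (hθ1 : θ < 1) (hne : y₁ / x₁ ≠ y₂ / x₂) :
    Np p (θ * x₁ + (1 - θ) * x₂) (θ * y₁ + (1 - θ) * y₂)
      < θ * Np p x₁ y₁ + (1 - θ) * Np p x₂ y₂ := by
  have hp0 : (0:ℝ) < p := one_pos.trans hp
  set X : ℝ := θ * x₁ + (1 - θ) * x₂ with hX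
  have hXpos : 0 < X := by nlinarith
  set lam : ℝ := θ * x₁ / X with hlam
  have hl0 : 0 < lam := by positivity
  have hl1 : lam < 1 := by
    rw [hlam, div_lt_one hXpos]; nlinarith
  have hsum : lam + (1 - lam) = 1 := by ring
  have hYnn : 0 ≤ θ * y₁ + (1 - θ) * y₂ := by nlinarith
  have hcomb : (θ * y₁ + (1 - θ) * y₂) / X = lam * (y₁ / x₁) + (1 - lam) * (y₂ / x₂) := by
    have h1lam : 1 - lam = (1 - θ) * x₂ / X := by
      rw [hlam]; field_simp; rw [hX]; ring
    rw [hlam, h1lam]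
    field_simp
  have hphi := (phi_strictConvex hp).2 (Set.mem_Ici.2 (by positivity : (0:ℝ) ≤ y₁ / x₁))
    (Set.mem_Ici.2 (by positivity : (0:ℝ) ≤ y₂ / x₂)) hne hl0 (by linarith) hsum
  simp only [smul_eq_mul] at hphi
  have e1 : Np p X (θ * y₁ + (1 - θ) * y₂) = X * (1 + ((θ * y₁ + (1 - θ) * y₂) / X) ^ p) ^ (1/p) :=
    Np_persp hp0 hXpos hYnn
  have e2 : Np p x₁ y₁ = x₁ * (1 + (y₁ / x₁) ^ p) ^ (1/p) := Np_persp hp0 hx₁ hy₁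
  have e3 : Np p x₂ y₂ = x₂ * (1 + (y₂ / x₂) ^ p) ^ (1/p) := Np_persp hp0 hx₂ hy₂
  rw [e1, e2, e3, hcomb]
  have hmul := mul_lt_mul_of_pos_left hphi hXpos
  calc X * (1 + (lam * (y₁ / x₁) + (1 - lam) * (y₂ / x₂)) ^ p) ^ (1/p)
      < X * (lam * (1 + (y₁ / x₁) ^ p) ^ (1/p) + (1 - lam) * (1 + (y₂ / x₂) ^ p) ^ (1/p)) := hmul
    _ = θ * (x₁ * (1 + (y₁ / x₁) ^ p) ^ (1/p)) + (1 - θ) * (x₂ * (1 + (y₂ / x₂) ^ p) ^ (1/p)) := by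
        have h1lam : 1 - lam = (1 - θ) * x₂ / X := by
          rw [hlam]; field_simp; rw [hX]; ring
        rw [hlam, h1lam]
        field_simp

/-- For `p ∈ (1,∞)`, `H*` is convex on `[0,1]²`, and strictly convex on `(0,1] × [0,1]`. -/
theorem stmt_6 (p : ℝ) (hp : 1 < p) :
    ConvexOn ℝ (Set.Icc (0 : ℝ) 1 ×ˢ Set.Icc (0 : ℝ) 1) (Hstar p) ∧
    (∀ f g : ℝ × ℝ, f ∈ Set.Ioc (0 : ℝ) 1 ×ˢ Set.Icc (0 : ℝ) 1 →
      g ∈ Set.Ioc (0 : ℝ) 1 ×ˢ Set.Icc (0 : ℝ) 1 → f ≠ g →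
      ∀ θ : ℝ, 0 < θ → θ < 1 →
        Hstar p (θ • f + (1 - θ) • g) < θ * Hstar p f + (1 - θ) * Hstar p g) := by
  have hp1 : (1:ℝ) ≤ p := hp.le
  have hH : ∀ f : ℝ × ℝ, Hstar p f = -f.1 + Np p f.1 (1 - f.2) + Np p f.1 f.2 - 1 := by
    intro f; rfl
  constructor
  · constructor
    · exact (convex_Icc 0 1).prod (convex_Icc 0 1)
    · rintro x ⟨hx1, hx2⟩ y ⟨hy1, hy2⟩ a b ha hb hab
      simp only [Set.mem_Icc] at hx1 hx2 hy1 hy2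
      have hc1 : (a • x + b • y).1 = a * x.1 + b * y.1 := by simp
      have hc2 : (a • x + b • y).2 = a * x.2 + b * y.2 := by simp
      rw [hH, hH, hH, hc1, hc2]
      have h1 : 1 - (a * x.2 + b * y.2) = a * (1 - x.2) + b * (1 - y.2) := by
        linear_combination -hab
      rw [h1]
      have t1 := Np_conv hp1 hx1.1 (by linarith [hx2.2] : (0:ℝ) ≤ 1 - x.2) hy1.1
        (by linarith [hy2.2] : (0:ℝ) ≤ 1 - y.2) ha hb
      have t2 := Np_conv hp1 hx1.1 hx2.1 hy1.1 hy2.1 ha hb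
      have : a * Hstar p x + b * Hstar p y
          = a * (-x.1 + Np p x.1 (1 - x.2) + Np p x.1 x.2 - 1)
            + b * (-y.1 + Np p y.1 (1 - y.2) + Np p y.1 y.2 - 1) := by rw [hH, hH]
      simp only [smul_eq_mul]
      nlinarith [t1, t2]
  · rintro f g ⟨hf1, hf2⟩ ⟨hg1, hg2⟩ hne θ hθ hθ1
    simp only [Set.mem_Ioc, Set.mem_Icc] at hf1 hf2 hg1 hg2
    have hf1' : 0 < f.1 := hf1.1
    have hg1' : 0 < g.1 := hg1.1
    have hc1 : (θ • f + (1 - θ) • g).1 = θ * f.1 + (1 - θ) * g.1 := by simp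
    have hc2 : (θ • f + (1 - θ) • g).2 = θ * f.2 + (1 - θ) * g.2 := by simp
    rw [hH, hH, hH, hc1, hc2]
    have h1 : 1 - (θ * f.2 + (1 - θ) * g.2) = θ * (1 - f.2) + (1 - θ) * (1 - g.2) := by ring
    rw [h1]
    have hf2' : 0 ≤ 1 - f.2 := by linarith [hf2.2]
    have hg2' : 0 ≤ 1 - g.2 := by linarith [hg2.2]
    have hcase : f.2 / f.1 ≠ g.2 / g.1 ∨ (1 - f.2) / f.1 ≠ (1 - g.2) / g.1 := by
      by_contra hcon
      push_neg at hcon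
      obtain ⟨e1, e2⟩ := hcon
      rw [div_eq_div_iff hf1'.ne' hg1'.ne'] at e1 e2
      have hfg1 : f.1 = g.1 := by nlinarith
      have hfg2 : f.2 = g.2 := by
        rw [hfg1] at e1
        exact mul_right_cancel₀ hg1'.ne' e1
      exact hne (Prod.ext hfg1 hfg2)
    rcases hcase with hcase | hcase
    · have t1 := Np_conv hp1 hf1'.le hf2' hg1'.le hg2' hθ.le (by linarith : (0:ℝ) ≤ 1 - θ)
      have t2 := Np_strict hp hf1' hf2.1 hg1' hg2.1 hθ hθ1 hcase
      linarith
    · have t1 := Np_strict hp hf1' hf2' hg1' hg2' hθ hθ1 hcase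
      have t2 := Np_conv hp1 hf1'.le hf2.1 hg1'.le hg2.1 hθ.le (by linarith : (0:ℝ) ≤ 1 - θ)
      linarith
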